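/- Let $E\subset\mathbb{R}^d$ be Lebesgue measurable with $\mathcal{L}(E)>0$ and let $t\ge 0$. Then $\mathcal{H}_\infty^t(E) \ge g_t(E)$, where $g_t(E) = \mathcal{L}(E)^2 / I_t(E)$ and $I_t(E) = \iint_{E\times E} |x-y|^{-t}\, d\mathcal{L}(x)\, d\mathcal{L}(y)$. -/

import Mathlib

open MeasureTheory Filter Set
open scoped ENNReal NNReal

/-- The `t`-dimensional Hausdorff content of a set. -/
noncomputable def hContent {X : Type*} [EMetricSpace X] (t : ℝ) (F : Set X) : ℝ≥0∞ :=
  ⨅ (C : ℕ → Set X) (_ : F ⊆ ⋃ n, C n), ∑' n, EMetric.diam (C n) ^ t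

/-- The `t`-energy of a measure: `∬ |x-y|^{-t} dμ dμ`. -/
noncomputable def energy {X : Type*} [EMetricSpace X] [MeasurableSpace X] (t : ℝ) (μ : Measure X) : ℝ≥0∞ :=
  ∫⁻ x, ∫⁻ y, edist x y ^ (-t) ∂μ ∂μ

private lemma sq_rpow_half (x : ℝ≥0∞) : (x ^ (2⁻¹ : ℝ)) ^ 2 = x := by
  rw [← ENNReal.rpow_natCast (x ^ (2⁻¹ : ℝ)) 2, ← ENNReal.rpow_mul]
  norm_num

private lemma rpow_half_sq (x : ℝ≥0∞) : (x ^ 2) ^ (2⁻¹ : ℝ) = x := by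
  rw [← ENNReal.rpow_natCast x 2, ← ENNReal.rpow_mul]
  norm_num

/-- For a Lebesgue measurable set `E ⊆ ℝ^d` of positive measure and `t ≥ 0`,
`H^t_∞(E) ≥ g_t(E) = L(E)² / I_t(E)`. -/
theorem stmt1 (d : ℕ) (t : ℝ) (ht : 0 ≤ t) (E : Set (EuclideanSpace ℝ (Fin d)))
    (hE : MeasurableSet E) (hpos : 0 < volume E) :
    volume E ^ 2 / energy t (volume.restrict E) ≤ hContent t E := by
  classical
  set μ := volume.restrict E with hμ
  by_cases htop : energy t μ = ⊤
  · rw [htop]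
    simp
  refine le_iInf fun C => le_iInf fun hC => ?_
  -- replace the cover by a measurable cover with smaller diameters
  set B : ℕ → Set (EuclideanSpace ℝ (Fin d)) := fun n => E ∩ closure (C n) with hB
  have hBmeas : ∀ n, MeasurableSet (B n) := fun n =>
    hE.inter isClosed_closure.measurableSet
  have hBdiam : ∀ n, EMetric.diam (B n) ≤ EMetric.diam (C n) := fun n => by
    calc EMetric.diam (B n) ≤ EMetric.diam (closure (C n)) :=
          EMetric.diam_mono inter_subset_right
    _ = EMetric.diam (C n) := EMetric.diam_closure _
  have hBcover : E ⊆ ⋃ n, B n := by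
    intro x hx
    rcases mem_iUnion.1 (hC hx) with ⟨n, hn⟩
    exact mem_iUnion.2 ⟨n, hx, subset_closure hn⟩
  suffices h : volume E ^ 2 / energy t μ ≤ ∑' n, EMetric.diam (B n) ^ t by
    refine h.trans (ENNReal.tsum_le_tsum fun n => ENNReal.rpow_le_rpow (hBdiam n) ht)
  -- disjointify
  set D : ℕ → Set (EuclideanSpace ℝ (Fin d)) := disjointed B with hD
  have hDmeas : ∀ n, MeasurableSet (D n) := MeasurableSet.disjointed hBmeas
  have hDdisj : Pairwise (Function.onFun Disjoint D) := disjoint_disjointed B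
  have hDB : ∀ n, D n ⊆ B n := fun n => disjointed_le B n
  have hDcover : E ⊆ ⋃ n, D n := by rw [hD, iUnion_disjointed]; exact hBcover
  set k : EuclideanSpace ℝ (Fin d) → EuclideanSpace ℝ (Fin d) → ℝ≥0∞ :=
    fun x y => edist x y ^ (-t) with hk
  have hkmeas : ∀ x, Measurable (k x) := fun x =>
    ENNReal.continuous_rpow_const.measurable.comp (measurable_edist_right)
  set e : ℕ → ℝ≥0∞ := fun n => ∫⁻ x in D n, ∫⁻ y in D n, k x y ∂μ ∂μ with he
  set b : ℕ → ℝ≥0∞ := fun n => EMetric.diam (B n) ^ t with hbdef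
  -- sum of local energies is at most the total energy
  have hsum : ∑' n, e n ≤ energy t μ := by
    have step : ∀ n, e n ≤ ∫⁻ x in D n, ∫⁻ y, k x y ∂μ ∂μ := fun n =>
      lintegral_mono fun x => lintegral_mono' Measure.restrict_le_self le_rfl
    calc ∑' n, e n ≤ ∑' n, ∫⁻ x in D n, ∫⁻ y, k x y ∂μ ∂μ :=
          ENNReal.tsum_le_tsum step
    _ = ∫⁻ x in ⋃ n, D n, ∫⁻ y, k x y ∂μ ∂μ :=
          (lintegral_iUnion hDmeas hDdisj _).symm
    _ ≤ ∫⁻ x, ∫⁻ y, k x y ∂μ ∂μ := setLIntegral_le_lintegral _ _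
    _ = energy t μ := rfl
  -- key local estimate
  have hkey : ∀ n, μ (D n) ^ 2 ≤ b n * e n := by
    intro n
    by_cases h0 : μ (D n) = 0
    · simp [h0]
    rcases ht.eq_or_lt with ht0 | htpos
    · -- t = 0
      have hek : ∀ x y, k x y = 1 := by
        intro x y; simp [hk, ← ht0]
      have heval : e n = μ (D n) * μ (D n) := by
        simp only [he, hek]
        simp [lintegral_const, Measure.restrict_apply, MeasurableSet.univ]
      rw [heval, hbdef, ← ht0]
      simp [sq]
    by_cases hdiam : EMetric.diam (B n) = 0
    · -- degenerate case: would make the energy infinite, contradiction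
      exfalso
      have hzero : ∀ x ∈ D n, ∀ y ∈ D n, edist x y = 0 := by
        intro x hx y hy
        have := EMetric.edist_le_diam_of_mem (hDB n hx) (hDB n hy)
        exact nonpos_iff_eq_zero.mp (this.trans hdiam.le)
      have hetop : e n = ⊤ := by
        have inner : ∀ x ∈ D n, ∫⁻ y in D n, k x y ∂μ = ⊤ := by
          intro x hx
          have : ∫⁻ y in D n, k x y ∂μ = ∫⁻ _ in D n, (⊤ : ℝ≥0∞) ∂μ := by
            refine setLIntegral_congr_fun (hDmeas n) ?_
            intro y hy
            rw [hk]
            simp only []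
            rw [hzero x hx y hy, ENNReal.zero_rpow_of_neg (by linarith)]
          rw [this, setLIntegral_const]
          exact ENNReal.top_mul h0
        have : e n = ∫⁻ _ in D n, (⊤ : ℝ≥0∞) ∂μ := by
          refine setLIntegral_congr_fun (hDmeas n) ?_
          intro x hx
          exact inner x hx
        rw [this, setLIntegral_const]
        exact ENNReal.top_mul h0
      have : e n ≤ energy t μ := le_trans (ENNReal.le_tsum n) hsum
      rw [hetop, top_le_iff] at this
      exact htop this
    · -- main case
      have hbne : b n ≠ 0 := by
        rw [hbdef]
        simp only [ne_eq, ENNReal.rpow_eq_zero_iff, not_or]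
        constructor
        · rintro ⟨h1, _⟩; exact hdiam h1
        · rintro ⟨_, h2⟩; linarith
      have hpt : ∀ x ∈ D n, ∀ y ∈ D n, (1 : ℝ≥0∞) ≤ b n * k x y := by
        intro x hx y hy
        have hxy : edist x y ≤ EMetric.diam (B n) :=
          EMetric.edist_le_diam_of_mem (hDB n hx) (hDB n hy)
        rcases eq_or_ne (edist x y) 0 with hz | hz
        · rw [hk]; simp only []
          rw [hz, ENNReal.zero_rpow_of_neg (by linarith), ENNReal.mul_top hbne]
          exact le_top
        · have hnt : edist x y ≠ ⊤ := edist_ne_top x y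
          calc (1 : ℝ≥0∞) = edist x y ^ t * edist x y ^ (-t) := by
                rw [← ENNReal.rpow_add _ _ hz hnt]; simp
          _ ≤ b n * k x y :=
                mul_le_mul_of_nonneg_right (ENNReal.rpow_le_rpow hxy ht) (by positivity)
      calc μ (D n) ^ 2 = ∫⁻ x in D n, ∫⁻ _ in D n, (1 : ℝ≥0∞) ∂μ ∂μ := by
            simp [sq, setLIntegral_const]
      _ ≤ ∫⁻ x in D n, ∫⁻ y in D n, b n * k x y ∂μ ∂μ := by
            refine setLIntegral_mono' (hDmeas n) fun x hx => ?_
            exact setLIntegral_mono' (hDmeas n) fun y hy => by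
              simpa using hpt x hx y hy
      _ = ∫⁻ x in D n, b n * ∫⁻ y in D n, k x y ∂μ ∂μ := by
            refine setLIntegral_congr_fun (hDmeas n) ?_
            intro x _
            exact lintegral_const_mul (b n) (hkmeas x)
      _ = b n * e n := by
            rw [he]
            refine lintegral_const_mul (b n) ?_
            have : Measurable fun p : EuclideanSpace ℝ (Fin d) × EuclideanSpace ℝ (Fin d) =>
                k p.1 p.2 :=
              ENNReal.continuous_rpow_const.measurable.comp measurable_edist
            exact this.lintegral_prod_right'
  -- Cauchy–Schwarz
  have hCS : (∑' n, μ (D n)) ^ 2 ≤ (∑' n, b n) * (∑' n, e n) := by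
    have h1 : ∑' n, μ (D n) ≤ (∑' n, b n) ^ (2⁻¹ : ℝ) * (∑' n, e n) ^ (2⁻¹ : ℝ) := by
      have hterm : ∀ n, μ (D n) ≤ b n ^ (2⁻¹ : ℝ) * e n ^ (2⁻¹ : ℝ) := by
        intro n
        calc μ (D n) = (μ (D n) ^ 2) ^ (2⁻¹ : ℝ) := (rpow_half_sq _).symm
        _ ≤ (b n * e n) ^ (2⁻¹ : ℝ) := ENNReal.rpow_le_rpow (hkey n) (by norm_num)
        _ = b n ^ (2⁻¹ : ℝ) * e n ^ (2⁻¹ : ℝ) := ENNReal.mul_rpow_of_nonneg _ _ (by norm_num)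
      have holder := ENNReal.lintegral_mul_le_Lp_mul_Lq (Measure.count (α := ℕ))
        Real.HolderConjugate.two_two
        (f := fun n => b n ^ (2⁻¹ : ℝ)) (g := fun n => e n ^ (2⁻¹ : ℝ))
        measurable_from_nat.aemeasurable measurable_from_nat.aemeasurable
      rw [lintegral_count, lintegral_count, lintegral_count] at holder
      calc ∑' n, μ (D n) ≤ ∑' n, b n ^ (2⁻¹ : ℝ) * e n ^ (2⁻¹ : ℝ) :=
            ENNReal.tsum_le_tsum hterm
      _ ≤ (∑' n, (b n ^ (2⁻¹ : ℝ)) ^ (2 : ℝ)) ^ (1 / 2 : ℝ) *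
            (∑' n, (e n ^ (2⁻¹ : ℝ)) ^ (2 : ℝ)) ^ (1 / 2 : ℝ) := holder
      _ = (∑' n, b n) ^ (2⁻¹ : ℝ) * (∑' n, e n) ^ (2⁻¹ : ℝ) := by
            have hb2 : ∀ x : ℝ≥0∞, (x ^ (2⁻¹ : ℝ)) ^ (2 : ℝ) = x := by
              intro x
              rw [← ENNReal.rpow_mul]; norm_num
            simp only [hb2, one_div]
    calc (∑' n, μ (D n)) ^ 2 ≤ ((∑' n, b n) ^ (2⁻¹ : ℝ) * (∑' n, e n) ^ (2⁻¹ : ℝ)) ^ 2 :=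
          pow_le_pow_left' h1 2
    _ = (∑' n, b n) * (∑' n, e n) := by
          rw [mul_pow, sq_rpow_half, sq_rpow_half]
  -- put things together
  have hEmu : volume E = μ E := by
    rw [hμ, Measure.restrict_apply_self]
  have hcount : μ E ≤ ∑' n, μ (D n) := by
    calc μ E ≤ μ (⋃ n, D n) := measure_mono hDcover
    _ = ∑' n, μ (D n) := measure_iUnion hDdisj hDmeas
  have hmain : volume E ^ 2 ≤ (∑' n, b n) * energy t μ := by
    calc volume E ^ 2 = μ E ^ 2 := by rw [hEmu]
    _ ≤ (∑' n, μ (D n)) ^ 2 := pow_le_pow_left' hcount 2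
    _ ≤ (∑' n, b n) * (∑' n, e n) := hCS
    _ ≤ (∑' n, b n) * energy t μ := mul_le_mul_of_nonneg_left hsum (by positivity)
  exact ENNReal.div_le_of_le_mul hmain
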